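/- Let J be an adapted complex structure on a finite simple graph G. If a is a distinguished edge of G and Ja ∈ E, then Ja is also a distinguished edge. -/
import Mathlib
set_option linter.unusedSectionVars false
set_option maxHeartbeats 1000000


/-!  Framework: the 2-step nilpotent Lie algebra `𝔫_G` associated to a finite simple
graph `G` (Dani–Mainkar construction), and adapted complex structures on it. -/

open scoped BigOperators

namespace GraphLie

variable {V : Type*} [Fintype V] [LinearOrder V]

/-- The underlying real vector space of the Lie algebra `𝔫_G` associated to a graph `G`:
real-valued functions on its basis `V ⊕ G.edgeSet` (vertices and edges). -/
abbrev Niln (G : SimpleGraph V) : Type _ := (V ⊕ G.edgeSet) → ℝ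

variable (G : SimpleGraph V) [DecidableRel G.Adj]

/-- The basis vector of `𝔫_G` corresponding to the vertex `v`. -/
noncomputable def vtx (v : V) : Niln G := Pi.single (Sum.inl v) 1

/-- The basis vector of `𝔫_G` corresponding to the edge `e`. -/
noncomputable def edg (e : G.edgeSet) : Niln G := Pi.single (Sum.inr e) 1

/-- The basis vector of `𝔫_G` corresponding to a vertex or an edge. -/
noncomputable def basisVec (b : V ⊕ G.edgeSet) : Niln G := Pi.single b 1

/-- The bracket of two vertex generators: for adjacent vertices `i < j` (with respect to
the chosen labeling of the vertices) `[v_i, v_j] = e_{i,j}` and `[v_j, v_i] = -e_{i,j}`;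
non-adjacent vertices commute. -/
noncomputable def bracketVtx (i j : V) : Niln G :=
  if h : G.Adj i j then
    (if i < j then edg G ⟨s(i, j), G.mem_edgeSet.mpr h⟩
     else - edg G ⟨s(i, j), G.mem_edgeSet.mpr h⟩)
  else 0

/-- The Lie bracket of `𝔫_G`, extended bilinearly from the generators; all the
edge generators are central. -/
noncomputable def bracket (x y : Niln G) : Niln G :=
  ∑ i : V, ∑ j : V, (x (Sum.inl i) * y (Sum.inl j)) • bracketVtx G i j

/-- An adapted complex structure on the graph `G`: a linear endomorphism `J` of `𝔫_G`
with `J ∘ J = -id`, whose Nijenhuis tensor vanishes, and which sends each basis vector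
(vertex or edge) to plus or minus a basis vector. -/
structure AdaptedCS : Type _ where
  J : Niln G →ₗ[ℝ] Niln G
  j_squared : ∀ x, J (J x) = -x
  integrable : ∀ x y,
    bracket G x y + J (bracket G (J x) y + bracket G x (J y)) - bracket G (J x) (J y) = 0
  adapted : ∀ b : V ⊕ G.edgeSet,
    (∃ b', J (basisVec G b) = basisVec G b') ∨ (∃ b', J (basisVec G b) = - basisVec G b')

variable {G}

/-- An edge of `G` joining vertices `v` and `w` is distinguished if `Jv = w` or `Jw = v`. -/
def AdaptedCS.Distinguished (Jc : AdaptedCS G) (e : G.edgeSet) : Prop :=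
  ∃ v w : V, (e : Sym2 V) = s(v, w) ∧
    (Jc.J (vtx G v) = vtx G w ∨ Jc.J (vtx G w) = vtx G v)

end GraphLie

namespace GraphLie

variable {V : Type*} [Fintype V] [LinearOrder V] {G : SimpleGraph V} [DecidableRel G.Adj]

lemma vtx_apply_inl (v u : V) : vtx G v (Sum.inl u) = if u = v then 1 else 0 := by
  simp [vtx, Pi.single_apply]

lemma vtx_apply_inr (v : V) (f : G.edgeSet) : vtx G v (Sum.inr f) = 0 := by
  simp [vtx, Pi.single_apply]

lemma edg_apply_inr (e f : G.edgeSet) : edg G e (Sum.inr f) = if f = e then 1 else 0 := by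
  simp [edg, Pi.single_apply]

lemma edg_apply_inl (e : G.edgeSet) (u : V) : edg G e (Sum.inl u) = 0 := by
  simp [edg, Pi.single_apply]

lemma bracketVtx_apply_inl (i j u : V) : bracketVtx G i j (Sum.inl u) = 0 := by
  unfold bracketVtx
  split
  · split <;> simp [edg_apply_inl]
  · rfl

lemma bracketVtx_apply_inr_ne (i j : V) (f : G.edgeSet) (h : (f : Sym2 V) ≠ s(i, j)) :
    bracketVtx G i j (Sum.inr f) = 0 := by
  unfold bracketVtx
  split
  · have hf : ∀ (pf : s(i,j) ∈ G.edgeSet), f ≠ ⟨s(i,j), pf⟩ := by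
      intro pf hh; exact h (congrArg Subtype.val hh)
    split <;> simp [edg_apply_inr, hf _]
  · rfl

lemma bracket_vtx_vtx (v u : V) : bracket G (vtx G v) (vtx G u) = bracketVtx G v u := by
  unfold bracket
  rw [Finset.sum_eq_single v]
  · rw [Finset.sum_eq_single u]
    · simp [vtx_apply_inl]
    · intro j _ hj; simp [vtx_apply_inl, hj]
    · simp
  · intro i _ hi; simp [vtx_apply_inl, hi]
  · simp

lemma bracket_edg_left (e : G.edgeSet) (y : Niln G) : bracket G (edg G e) y = 0 := by
  unfold bracket; simp [edg_apply_inl]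

lemma bracket_edg_right (x : Niln G) (e : G.edgeSet) : bracket G x (edg G e) = 0 := by
  unfold bracket; simp [edg_apply_inl]

lemma bracket_smul_left (c : ℝ) (x y : Niln G) :
    bracket G (c • x) y = c • bracket G x y := by
  funext z
  simp only [bracket, Finset.sum_apply, Pi.smul_apply, smul_eq_mul, Finset.mul_sum]
  refine Finset.sum_congr rfl fun i _ => Finset.sum_congr rfl fun j _ => by ring

lemma bracket_smul_right (c : ℝ) (x y : Niln G) :
    bracket G x (c • y) = c • bracket G x y := by
  funext z
  simp only [bracket, Finset.sum_apply, Pi.smul_apply, smul_eq_mul, Finset.mul_sum]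
  refine Finset.sum_congr rfl fun i _ => Finset.sum_congr rfl fun j _ => by ring

lemma basisVec_inl (v : V) : basisVec G (Sum.inl v) = vtx G v := rfl
lemma basisVec_inr (e : G.edgeSet) : basisVec G (Sum.inr e) = edg G e := rfl

lemma adapted' (Jc : AdaptedCS G) (b : V ⊕ G.edgeSet) :
    ∃ (c : ℝ) (b' : V ⊕ G.edgeSet), (c = 1 ∨ c = -1) ∧
      Jc.J (basisVec G b) = c • basisVec G b' := by
  rcases Jc.adapted b with ⟨b', h⟩ | ⟨b', h⟩
  · exact ⟨1, b', Or.inl rfl, by simpa using h⟩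
  · exact ⟨-1, b', Or.inr rfl, by simpa using h⟩

lemma bracketVtx_adj {p q : V} (h : G.Adj p q) {b : G.edgeSet} (hb : (b : Sym2 V) = s(p, q)) :
    ∃ δ : ℝ, (δ = 1 ∨ δ = -1) ∧ bracketVtx G p q = δ • edg G b := by
  have hbe : (⟨s(p,q), G.mem_edgeSet.mpr h⟩ : G.edgeSet) = b := Subtype.ext hb.symm
  unfold bracketVtx
  rw [dif_pos h, hbe]
  by_cases hlt : p < q
  · exact ⟨1, Or.inl rfl, by rw [if_pos hlt, one_smul]⟩
  · exact ⟨-1, Or.inr rfl, by rw [if_neg hlt]; module⟩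

/-- From `J (vtx v) = vtx w` we get `J (vtx w) = - vtx v`. -/
lemma j_vtx_flip (Jc : AdaptedCS G) {v w : V} (h : Jc.J (vtx G v) = vtx G w) :
    Jc.J (vtx G w) = - vtx G v := by
  have := Jc.j_squared (vtx G v)
  rwa [h] at this

lemma j_edg_flip (Jc : AdaptedCS G) {a b : G.edgeSet} (h : Jc.J (edg G a) = edg G b) :
    Jc.J (edg G b) = - edg G a := by
  have := Jc.j_squared (edg G a)
  rwa [h] at this

/-- Helper A: if `Jp = c • vtx s` with `s(s,q) = s(v,w)` and `Jv = w`, `p ≠ q`, contradiction. -/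
lemma helperA (Jc : AdaptedCS G) {v w p q s : V} {c : ℝ}
    (hc : c = 1 ∨ c = -1)
    (hJv : Jc.J (vtx G v) = vtx G w)
    (hJp : Jc.J (vtx G p) = c • vtx G s)
    (hpq : p ≠ q) (hsq : s(s, q) = s(v, w)) : False := by
  have hJw : Jc.J (vtx G w) = - vtx G v := j_vtx_flip Jc hJv
  have hsq' := (Sym2.eq_iff).mp hsq
  have hJ2 : -(vtx G p) = c • Jc.J (vtx G s) := by
    have := Jc.j_squared (vtx G p)
    rw [hJp, map_smul] at this
    exact this.symm
  have hcne : c ≠ 0 := by rcases hc with h | h <;> rw [h] <;> norm_num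
  rcases hsq' with ⟨hs, hq⟩ | ⟨hs, hq⟩
  · -- s = v, q = w : -vtx p = c • vtx w ; eval at inl w
    subst hs hq
    rw [hJv] at hJ2
    have := congrFun hJ2 (Sum.inl q)
    simp only [Pi.neg_apply, Pi.smul_apply, vtx_apply_inl, smul_eq_mul, if_pos rfl] at this
    by_cases hpw : q = p
    · exact hpq hpw.symm
    · rw [if_neg hpw] at this
      rcases hc with h | h <;> rw [h] at this <;> norm_num at this
  · -- s = w, q = v : -vtx p = -c • vtx v
    subst hs hq
    rw [j_vtx_flip Jc hJv] at hJ2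
    have := congrFun hJ2 (Sum.inl q)
    simp only [Pi.neg_apply, Pi.smul_apply, vtx_apply_inl, smul_eq_mul, if_pos rfl] at this
    by_cases hpv : q = p
    · exact hpq hpv.symm
    · rw [if_neg hpv] at this
      rcases hc with h | h <;> rw [h] at this <;> norm_num at this

lemma helperB (Jc : AdaptedCS G) {v w p q t : V} {d : ℝ}
    (hd : d = 1 ∨ d = -1)
    (hJv : Jc.J (vtx G v) = vtx G w)
    (hJq : Jc.J (vtx G q) = d • vtx G t)
    (hpq : p ≠ q) (hpt : s(p, t) = s(v, w)) : False :=
  helperA Jc hd hJv hJq (Ne.symm hpq) (by rw [← hpt, Sym2.eq_swap])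

lemma sym2_exists (x : Sym2 V) : ∃ p q : V, x = s(p, q) := by
  induction x using Sym2.ind with
  | _ p q => exact ⟨p, q, rfl⟩

lemma main_lemma (Jc : AdaptedCS G) (a b : G.edgeSet) (v w : V)
    (hav : (a : Sym2 V) = s(v, w))
    (hJv : Jc.J (vtx G v) = vtx G w)
    (hb : Jc.J (edg G a) = edg G b) : Jc.Distinguished b := by
  obtain ⟨p, q, hbpq⟩ := sym2_exists (b : Sym2 V)
  have hadj_b : G.Adj p q := G.mem_edgeSet.mp (hbpq ▸ b.2)
  have hpq : p ≠ q := hadj_b.ne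
  obtain ⟨δ, hδ, hbr_pq⟩ := bracketVtx_adj hadj_b hbpq
  have hδne : δ ≠ 0 := by rcases hδ with h | h <;> rw [h] <;> norm_num
  have hcne0 : ∀ c : ℝ, (c = 1 ∨ c = -1) → c ≠ 0 := by
    rintro c (rfl | rfl) <;> norm_num
  have hJb : Jc.J (edg G b) = - edg G a := j_edg_flip Jc hb
  obtain ⟨c, s', hc, hJp⟩ := adapted' Jc (Sum.inl p)
  obtain ⟨d, t', hd, hJq⟩ := adapted' Jc (Sum.inl q)
  rw [basisVec_inl] at hJp hJq
  have hint := Jc.integrable (vtx G p) (vtx G q)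
  rw [bracket_vtx_vtx, hbr_pq, hJp, hJq, bracket_smul_left, bracket_smul_left,
    bracket_smul_right, bracket_smul_right] at hint
  -- helper to kill a `bracketVtx _ _ (Sum.inr a) ≠ 0` possibility via helperA/helperB
  rcases s' with s | e
  case inr =>
    -- J p is (± an) edge
    rw [basisVec_inr, bracket_edg_left] at hint
    rcases t' with t | f
    case inr =>
      rw [basisVec_inr, bracket_edg_right, bracket_edg_right] at hint
      simp only [smul_zero, map_zero, add_zero, sub_zero, zero_add, map_smul] at hint
      have := congrFun hint (Sum.inr b)
      simp [edg_apply_inr] at this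
      exact absurd this hδne
    case inl =>
      simp only [basisVec_inl, basisVec_inr, bracket_edg_left, bracket_edg_right,
        bracket_vtx_vtx] at hint
      simp only [smul_zero, map_zero, add_zero, sub_zero, zero_add, map_add, map_smul] at hint
      -- hint : δ • edg b + d • J (bracketVtx p t) = 0
      have h2 := congrArg Jc.J hint
      simp only [map_add, map_smul, map_zero, Jc.j_squared, hJb] at h2
      -- h2 : δ • (- edg a) + d • (- bracketVtx p t) = 0
      have h3 := congrFun h2 (Sum.inr a)
      have hX : bracketVtx G p t (Sum.inr a) ≠ 0 := by
        intro h0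
        have h3 := congrFun h2 (Sum.inr a)
        simp only [Pi.add_apply, Pi.smul_apply, Pi.neg_apply, Pi.zero_apply, smul_eq_mul,
          edg_apply_inr, if_pos rfl, h0, mul_zero, mul_neg, mul_one, neg_zero, add_zero] at h3
        rcases hδ with rfl | rfl <;> norm_num at h3
      have hpt : s(p, t) = s(v, w) := by
        by_contra hne
        exact hX (bracketVtx_apply_inr_ne p t a (by rw [hav]; exact fun hh => hne hh.symm))
      exact absurd (helperB Jc hd hJv hJq hpq hpt) id
  case inl =>
    rw [basisVec_inl, bracket_vtx_vtx] at hint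
    rcases t' with t | f
    case inr =>
      rw [basisVec_inr, bracket_edg_right, bracket_edg_right] at hint
      simp only [smul_zero, map_zero, add_zero, sub_zero, zero_add, map_add, map_smul] at hint
      -- hint : δ • edg b + c • J (bracketVtx s q) = 0
      have h2 := congrArg Jc.J hint
      simp only [map_add, map_smul, map_zero, Jc.j_squared, hJb] at h2
      have h3 := congrFun h2 (Sum.inr a)
      have hX : bracketVtx G s q (Sum.inr a) ≠ 0 := by
        intro h0
        have h3 := congrFun h2 (Sum.inr a)
        simp only [Pi.add_apply, Pi.smul_apply, Pi.neg_apply, Pi.zero_apply, smul_eq_mul,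
          edg_apply_inr, if_pos rfl, h0, mul_zero, mul_neg, mul_one, neg_zero, add_zero] at h3
        rcases hδ with rfl | rfl <;> norm_num at h3
      have hsq : s(s, q) = s(v, w) := by
        by_contra hne
        exact hX (bracketVtx_apply_inr_ne s q a (by rw [hav]; exact fun hh => hne hh.symm))
      exact absurd (helperA Jc hc hJv hJp hpq hsq) id
    case inl =>
      simp only [basisVec_inl] at hJp hJq
      simp only [basisVec_inl, bracket_vtx_vtx] at hint
      -- hint : δ • edg b + J (c • brVtx s q + d • brVtx p t) - c • d • brVtx s t = 0
      have h2 := congrArg Jc.J hint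
      simp only [map_add, map_sub, map_smul, map_zero, Jc.j_squared, hJb] at h2
      -- h2 : δ • (-edg a) + (-(c • brVtx s q) + -(d • brVtx p t)) - c • d • J (brVtx s t) = 0
      -- first: show that bracketVtx s q and bracketVtx p t vanish at (Sum.inr a)
      have hXsq : bracketVtx G s q (Sum.inr a) = 0 := by
        by_cases hne : (a : Sym2 V) = s(s, q)
        · exact absurd (helperA Jc hc hJv hJp hpq (by rw [← hne, hav])) id
        · exact bracketVtx_apply_inr_ne s q a hne
      have hXpt : bracketVtx G p t (Sum.inr a) = 0 := by
        by_cases hne : (a : Sym2 V) = s(p, t)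
        · exact absurd (helperB Jc hd hJv hJq hpq (by rw [← hne, hav])) id
        · exact bracketVtx_apply_inr_ne p t a hne
      by_cases hadjst : G.Adj s t
      case neg =>
        -- bracketVtx s t = 0
        have hbrst : bracketVtx G s t = 0 := by unfold bracketVtx; rw [dif_neg hadjst]
        rw [hbrst] at h2
        have h3 := congrFun h2 (Sum.inr a)
        simp [edg_apply_inr, hXsq, hXpt] at h3
        exact absurd h3 hδne
      case pos =>
        set e : G.edgeSet := ⟨s(s, t), G.mem_edgeSet.mpr hadjst⟩ with he
        obtain ⟨η, hη, hbrst⟩ := bracketVtx_adj hadjst (b := e) rfl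
        obtain ⟨k, y, hk, hJe⟩ := adapted' Jc (Sum.inr e)
        rw [basisVec_inr] at hJe
        rw [hbrst, map_smul, hJe] at h2
        rcases y with u | f
        case inl =>
          rw [basisVec_inl] at h2
          have h3 := congrFun h2 (Sum.inl u)
          simp [edg_apply_inl, bracketVtx_apply_inl, vtx_apply_inl] at h3
          rcases h3 with h | h | h | h
          · exact absurd h (hcne0 c hc)
          · exact absurd h (hcne0 d hd)
          · exact absurd h (hcne0 η hη)
          · exact absurd h (hcne0 k hk)
        case inr =>
          rw [basisVec_inr] at h2
          have h3 := congrFun h2 (Sum.inr a)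
          simp only [Pi.add_apply, Pi.sub_apply, Pi.neg_apply, Pi.smul_apply, Pi.zero_apply,
            smul_eq_mul, edg_apply_inr, hXsq, hXpt, if_pos rfl, mul_zero, mul_neg, mul_one,
            neg_zero, add_zero, zero_add] at h3
          by_cases haf : a = f
          case neg =>
            rw [if_neg haf] at h3
            rcases hδ with rfl | rfl <;> norm_num at h3
          case pos =>
            subst haf
            -- now J (edg e) = k • edg a, hence -edg e = k • edg b
            have h4 := congrArg Jc.J hJe
            rw [basisVec_inr] at h4
            simp only [map_smul, Jc.j_squared, hb] at h4
            have h5 := congrFun h4 (Sum.inr e)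
            simp only [Pi.neg_apply, Pi.smul_apply, smul_eq_mul, edg_apply_inr, if_pos rfl] at h5
            by_cases heb : e = b
            case neg =>
              rw [if_neg heb] at h5
              norm_num at h5
            case pos =>
              have hbst : (b : Sym2 V) = s(s, t) := by rw [← heb]
              have hst := Sym2.eq_iff.mp (hbpq.symm.trans hbst)
              rcases hst with ⟨hps, hqt⟩ | ⟨hpt2, hqs⟩
              · -- p = s, q = t : J vtx p = c • vtx p, contradiction with J² = -1
                subst hps
                have h6 := Jc.j_squared (vtx G p)
                rw [hJp, map_smul, hJp] at h6
                have h7 := congrFun h6 (Sum.inl p)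
                simp only [Pi.smul_apply, Pi.neg_apply, smul_eq_mul, vtx_apply_inl,
                  if_pos rfl, mul_one] at h7
                rcases hc with rfl | rfl <;> norm_num at h7
              · -- p = t, q = s
                subst hpt2; subst hqs
                have h6 := Jc.j_squared (vtx G p)
                rw [hJp, map_smul, hJq, smul_smul] at h6
                have h7 := congrFun h6 (Sum.inl p)
                simp only [Pi.smul_apply, Pi.neg_apply, smul_eq_mul, vtx_apply_inl,
                  if_pos rfl, mul_one] at h7
                -- h7 : c * d = -1
                rcases hc with rfl | rfl
                · exact ⟨p, q, hbpq, Or.inl (by rw [hJp, one_smul])⟩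
                · have hd1 : d = 1 := by simp only [if_true, mul_one] at h7; linarith
                  exact ⟨p, q, hbpq, Or.inr (by rw [hJq, hd1, one_smul])⟩


/-- If `a` is a distinguished edge of `G` and `Ja ∈ E`, then `Ja` is
also a distinguished edge. -/
theorem statement2 (Jc : AdaptedCS G) (a b : G.edgeSet)
    (ha : Jc.Distinguished a) (hb : Jc.J (edg G a) = edg G b) :
    Jc.Distinguished b := by
  obtain ⟨v, w, hav, hJ | hJ⟩ := ha
  · exact main_lemma Jc a b v w hav hJ hb
  · exact main_lemma Jc a b w v (by rw [hav, Sym2.eq_swap]) hJ hb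

end GraphLie
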